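/- Let Θ be a compact metric space, r:Θ→Θ uniquely ergodic, and let f be a UEF monotone circle map homotopic to the identity, with lift F. Then the limit ρ(F) := lim_{n→∞} (F^n_θ(x)−x)/n exists, is independent of (θ,x), and the convergence is uniform on Θ×ℝ. Furthermore, ρ(F) depends continuously on F (with respect to uniform convergence of lifts). -/

import Mathlib

open Filter MeasureTheory Topology

/-- The fibre iterates `F^n_θ = F_{r^{n-1}(θ)} ∘ ⋯ ∘ F_θ` of a fibrewise lift `F` over the
base map `r`. -/
noncomputable def fibIter {Θ : Type*} (r : Θ → Θ) (F : Θ → ℝ → ℝ) : ℕ → Θ → ℝ → ℝ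
  | 0, _, x => x
  | n + 1, θ, x => F (r^[n] θ) (fibIter r F n θ x)

open Set
open scoped ENNReal NNReal

section RMK

variable {Θ : Type*} [MetricSpace Θ] [CompactSpace Θ]

/-- A positive, normalized linear functional on continuous functions. -/
structure IsPosFunctional (Λ : (Θ → ℝ) → ℝ) : Prop where
  add : ∀ g h : Θ → ℝ, Continuous g → Continuous h →
    Λ (fun x => g x + h x) = Λ g + Λ h
  smul : ∀ (c : ℝ) (g : Θ → ℝ), Continuous g → Λ (fun x => c * g x) = c * Λ g
  mono : ∀ g h : Θ → ℝ, Continuous g → Continuous h → (∀ x, g x ≤ h x) → Λ g ≤ Λ h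
  one : Λ (fun _ => 1) = 1

namespace IsPosFunctional

variable {Λ : (Θ → ℝ) → ℝ} (hΛ : IsPosFunctional Λ)

include hΛ

lemma zero : Λ (fun _ => 0) = 0 := by
  have h := hΛ.smul 0 (fun _ => (1:ℝ)) continuous_const
  simpa using h

lemma const (c : ℝ) : Λ (fun _ => c) = c := by
  have h := hΛ.smul c (fun _ => (1:ℝ)) continuous_const
  simpa [hΛ.one] using h

lemma nonneg (g : Θ → ℝ) (hg : Continuous g) (h0 : ∀ x, 0 ≤ g x) : 0 ≤ Λ g := by
  have := hΛ.mono (fun _ => 0) g continuous_const hg h0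
  rwa [hΛ.zero] at this

lemma le_one (g : Θ → ℝ) (hg : Continuous g) (h1 : ∀ x, g x ≤ 1) : Λ g ≤ 1 := by
  have := hΛ.mono g (fun _ => 1) hg continuous_const h1
  rwa [hΛ.one] at this

lemma sum (k : ℕ) (h : ℕ → Θ → ℝ) (hc : ∀ i, Continuous (h i)) :
    Λ (fun x => ∑ i ∈ Finset.range k, h i x) = ∑ i ∈ Finset.range k, Λ (h i) := by
  induction k with
  | zero => simpa using hΛ.zero
  | succ k ih =>
      have hsc : Continuous fun x => ∑ i ∈ Finset.range k, h i x :=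
        continuous_finset_sum _ fun i _ => hc i
      have := hΛ.add (fun x => ∑ i ∈ Finset.range k, h i x) (h k) hsc (hc k)
      simp only [Finset.sum_range_succ]
      rw [this, ih]

end IsPosFunctional

variable (Λ : (Θ → ℝ) → ℝ)

/-- Test functions for the Riesz content of a set. -/
def RZtest (K : Set Θ) : Set (Θ → ℝ) :=
  {h | Continuous h ∧ (∀ x, 0 ≤ h x) ∧ ∀ x ∈ K, 1 ≤ h x}

noncomputable def RZlam (K : Set Θ) : ℝ := sInf (Λ '' RZtest K)

variable {Λ}

lemma RZtest_nonempty (K : Set Θ) : ((fun _ => (1:ℝ))) ∈ RZtest (Θ := Θ) K :=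
  ⟨continuous_const, fun _ => zero_le_one, fun _ _ => le_refl 1⟩

lemma RZlam_bddBelow (hΛ : IsPosFunctional Λ) (K : Set Θ) :
    ∀ y ∈ Λ '' RZtest K, (0:ℝ) ≤ y := by
  rintro y ⟨h, ⟨hc, h0, _⟩, rfl⟩
  exact hΛ.nonneg h hc h0

lemma RZlam_nonneg (hΛ : IsPosFunctional Λ) (K : Set Θ) : 0 ≤ RZlam Λ K :=
  le_csInf ⟨_, Set.mem_image_of_mem _ (RZtest_nonempty K)⟩ (RZlam_bddBelow hΛ K)

lemma RZlam_le (hΛ : IsPosFunctional Λ) {K : Set Θ} {h : Θ → ℝ} (hh : h ∈ RZtest K) :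
    RZlam Λ K ≤ Λ h :=
  csInf_le ⟨0, fun y hy => RZlam_bddBelow hΛ K y hy⟩ (Set.mem_image_of_mem _ hh)

lemma le_RZlam (hΛ : IsPosFunctional Λ) {K : Set Θ} {c : ℝ}
    (hc : ∀ h ∈ RZtest K, c ≤ Λ h) : c ≤ RZlam Λ K :=
  le_csInf ⟨_, Set.mem_image_of_mem _ (RZtest_nonempty K)⟩ (by rintro y ⟨h, hh, rfl⟩; exact hc h hh)

lemma RZlam_mono (hΛ : IsPosFunctional Λ) {K₁ K₂ : Set Θ} (h : K₁ ⊆ K₂) :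
    RZlam Λ K₁ ≤ RZlam Λ K₂ := by
  apply csInf_le_csInf ⟨0, fun y hy => RZlam_bddBelow hΛ K₁ y hy⟩
    ⟨_, Set.mem_image_of_mem _ (RZtest_nonempty K₂)⟩
  exact Set.image_mono (fun f hf => ⟨hf.1, hf.2.1, fun x hx => hf.2.2 x (h hx)⟩)

lemma RZlam_exists_lt (hΛ : IsPosFunctional Λ) (K : Set Θ) {ε : ℝ} (hε : 0 < ε) :
    ∃ h ∈ RZtest (Θ := Θ) K, Λ h < RZlam Λ K + ε := by
  obtain ⟨y, ⟨h, hh, rfl⟩, hy⟩ := exists_lt_of_csInf_lt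
    ⟨_, Set.mem_image_of_mem _ (RZtest_nonempty K)⟩ (lt_add_of_pos_right (RZlam Λ K) hε)
  exact ⟨h, hh, hy⟩

lemma RZlam_union_le (hΛ : IsPosFunctional Λ) (K₁ K₂ : Set Θ) :
    RZlam Λ (K₁ ∪ K₂) ≤ RZlam Λ K₁ + RZlam Λ K₂ := by
  refine le_of_forall_pos_le_add fun ε hε => ?_
  obtain ⟨h₁, hh₁, hl₁⟩ := RZlam_exists_lt hΛ K₁ (half_pos hε)
  obtain ⟨h₂, hh₂, hl₂⟩ := RZlam_exists_lt hΛ K₂ (half_pos hε)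
  have hmem : (fun x => h₁ x + h₂ x) ∈ RZtest (Θ := Θ) (K₁ ∪ K₂) := by
    refine ⟨hh₁.1.add hh₂.1, fun x => add_nonneg (hh₁.2.1 x) (hh₂.2.1 x), ?_⟩
    rintro x (hx | hx)
    · exact le_add_of_le_of_nonneg (hh₁.2.2 x hx) (hh₂.2.1 x)
    · exact le_add_of_nonneg_of_le (hh₁.2.1 x) (hh₂.2.2 x hx)
  calc RZlam Λ (K₁ ∪ K₂) ≤ Λ (fun x => h₁ x + h₂ x) := RZlam_le hΛ hmem
    _ = Λ h₁ + Λ h₂ := hΛ.add _ _ hh₁.1 hh₂.1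
    _ ≤ RZlam Λ K₁ + RZlam Λ K₂ + ε := by linarith

lemma RZlam_union_disjoint (hΛ : IsPosFunctional Λ) {K₁ K₂ : Set Θ}
    (h₁ : IsClosed K₁) (h₂ : IsClosed K₂) (hd : Disjoint K₁ K₂) :
    RZlam Λ (K₁ ∪ K₂) = RZlam Λ K₁ + RZlam Λ K₂ := by
  refine le_antisymm (RZlam_union_le hΛ K₁ K₂) ?_
  obtain ⟨χ, hχ0, hχ1, hχI⟩ := exists_continuous_zero_one_of_isClosed h₁ h₂ hd
  refine le_RZlam hΛ ?_
  rintro h ⟨hc, h0, h1⟩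
  have hA : (fun x => h x * (1 - χ x)) ∈ RZtest (Θ := Θ) K₁ := by
    refine ⟨hc.mul (continuous_const.sub χ.continuous), fun x =>
      mul_nonneg (h0 x) (by linarith [(hχI x).2]), fun x hx => ?_⟩
    have : χ x = 0 := hχ0 hx
    simpa [this] using h1 x (Or.inl hx)
  have hB : (fun x => h x * χ x) ∈ RZtest (Θ := Θ) K₂ := by
    refine ⟨hc.mul χ.continuous, fun x => mul_nonneg (h0 x) (hχI x).1, fun x hx => ?_⟩
    have : χ x = 1 := hχ1 hx
    simpa [this] using h1 x (Or.inr hx)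
  have key : Λ (fun x => h x * (1 - χ x)) + Λ (fun x => h x * χ x) = Λ h := by
    rw [← hΛ.add (fun x => h x * (1 - χ x)) (fun x => h x * χ x) (hc.mul (continuous_const.sub χ.continuous)) (hc.mul χ.continuous)]
    congr 1
    funext x; ring
  calc RZlam Λ K₁ + RZlam Λ K₂ ≤ Λ (fun x => h x * (1 - χ x)) + Λ (fun x => h x * χ x) :=
        add_le_add (RZlam_le hΛ hA) (RZlam_le hΛ hB)
    _ = Λ h := key

/-- The Riesz content associated to a positive functional. -/
noncomputable def RZcontent (hΛ : IsPosFunctional Λ) : Content Θ where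
  toFun K := Real.toNNReal (RZlam Λ (K : Set Θ))
  mono' K₁ K₂ h := Real.toNNReal_mono (RZlam_mono hΛ h)
  sup_disjoint' K₁ K₂ hd hc₁ hc₂ := by
    have : RZlam Λ ((K₁ ⊔ K₂ : TopologicalSpace.Compacts Θ) : Set Θ)
        = RZlam Λ (K₁ : Set Θ) + RZlam Λ (K₂ : Set Θ) := by
      rw [TopologicalSpace.Compacts.coe_sup]
      exact RZlam_union_disjoint hΛ hc₁ hc₂ hd
    rw [this, Real.toNNReal_add (RZlam_nonneg hΛ _) (RZlam_nonneg hΛ _)]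
  sup_le' K₁ K₂ := by
    rw [← Real.toNNReal_add (RZlam_nonneg hΛ _) (RZlam_nonneg hΛ _)]
    apply Real.toNNReal_mono
    rw [TopologicalSpace.Compacts.coe_sup]
    exact RZlam_union_le hΛ _ _

end RMK
section RMK2

variable {Θ : Type*} [MetricSpace Θ] [CompactSpace Θ] [MeasurableSpace Θ] [BorelSpace Θ]
variable {Λ : (Θ → ℝ) → ℝ} (hΛ : IsPosFunctional Λ)

/-- The Riesz measure associated to a positive functional. -/
noncomputable def RZmeasure (hΛ : IsPosFunctional Λ) : Measure Θ := (RZcontent hΛ).measure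

lemma RZmeasure_open {U : Set Θ} (hU : IsOpen U) :
    RZmeasure hΛ U = ⨆ (K : TopologicalSpace.Compacts Θ) (_ : (K : Set Θ) ⊆ U),
      (Real.toNNReal (RZlam Λ (K : Set Θ)) : ℝ≥0∞) := by
  rw [RZmeasure, Content.measure_apply _ hU.measurableSet,
    Content.outerMeasure_of_isOpen _ U hU]
  rfl

lemma RZmeasure_open_le {U : Set Θ} (hU : IsOpen U) {h : Θ → ℝ} (hc : Continuous h)
    (h0 : ∀ x, 0 ≤ h x) (h1 : ∀ x ∈ U, 1 ≤ h x) :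
    RZmeasure hΛ U ≤ ENNReal.ofReal (Λ h) := by
  rw [RZmeasure_open hΛ hU]
  refine iSup₂_le fun K hK => ?_
  have : RZlam Λ (K : Set Θ) ≤ Λ h := RZlam_le hΛ ⟨hc, h0, fun x hx => h1 x (hK hx)⟩
  rw [ENNReal.ofReal]
  exact_mod_cast Real.toNNReal_mono this

lemma le_RZmeasure_open {U : Set Θ} (hU : IsOpen U) {φ : Θ → ℝ} (hc : Continuous φ)
    (h0 : ∀ x, 0 ≤ φ x) (h1 : ∀ x, φ x ≤ 1) {K : Set Θ} (hKc : IsCompact K)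
    (hsupp : ∀ x, φ x ≠ 0 → x ∈ K) (hKU : K ⊆ U) :
    ENNReal.ofReal (Λ φ) ≤ RZmeasure hΛ U := by
  have hlam : Λ φ ≤ RZlam Λ K := by
    refine le_RZlam hΛ ?_
    rintro h ⟨hhc, hh0, hh1⟩
    refine hΛ.mono φ h hc hhc fun x => ?_
    by_cases hx : x ∈ K
    · exact le_trans (h1 x) (hh1 x hx)
    · have : φ x = 0 := by
        by_contra h'
        exact hx (hsupp x h')
      rw [this]; exact hh0 x
  rw [RZmeasure_open hΛ hU]
  refine le_trans ?_ (le_iSup₂ (⟨K, hKc⟩ : TopologicalSpace.Compacts Θ) hKU)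
  rw [ENNReal.ofReal]
  exact_mod_cast Real.toNNReal_mono hlam

lemma RZmeasure_univ : RZmeasure hΛ (Set.univ : Set Θ) = 1 := by
  refine le_antisymm ?_ ?_
  · have := RZmeasure_open_le hΛ isOpen_univ (h := fun _ => 1) continuous_const
      (fun _ => zero_le_one) (fun _ _ => le_refl 1)
    simpa [hΛ.one] using this
  · have := le_RZmeasure_open hΛ isOpen_univ (φ := fun _ => 1) continuous_const
      (fun _ => zero_le_one) (fun _ => le_refl 1) (K := Set.univ) isCompact_univ
      (fun _ _ => trivial) subset_rfl
    simpa [hΛ.one] using this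

instance : IsProbabilityMeasure (RZmeasure hΛ) := ⟨RZmeasure_univ hΛ⟩

end RMK2
section RMK3

variable {Θ : Type*} [MetricSpace Θ] [CompactSpace Θ] [Nonempty Θ]
  [MeasurableSpace Θ] [BorelSpace Θ]
variable {Λ : (Θ → ℝ) → ℝ}

theorem RZmeasure_lintegral (hΛ : IsPosFunctional Λ) (g : Θ → ℝ) (hg : Continuous g)
    (h0 : ∀ x, 0 ≤ g x) :
    ∫⁻ x, ENNReal.ofReal (g x) ∂(RZmeasure hΛ) = ENNReal.ofReal (Λ g) := by
  set ν := RZmeasure hΛ with hν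
  obtain ⟨z, -, hz⟩ := isCompact_univ.exists_isMaxOn Set.univ_nonempty hg.continuousOn
  replace hz : ∀ x, g x ≤ g z := fun x => hz (Set.mem_univ x)
  set M : ℝ := max (g z) 1 with hMdef
  have hM1 : (1:ℝ) ≤ M := le_max_right _ _
  have hgM : ∀ x, g x ≤ M := fun x => le_trans (hz x) (le_max_left _ _)
  set A := ∫⁻ x, ENNReal.ofReal (g x) ∂ν with hA
  have main : ∀ δ : ℝ, 0 < δ →
      A + ENNReal.ofReal δ ≤ ENNReal.ofReal (Λ g + 2*δ) ∧
      ENNReal.ofReal (Λ g - δ) ≤ A + ENNReal.ofReal δ := by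
    intro δ δpos
    obtain ⟨m, hm⟩ := exists_nat_ge (M/δ)
    have hMm : M ≤ (m:ℝ) * δ := by
      rw [div_le_iff₀ δpos] at hm; linarith
    -- the layer functions
    set h : ℕ → Θ → ℝ :=
      fun i x => (min (g x) ((i:ℝ) * δ) - min (g x) (((i:ℝ) - 1) * δ)) / δ with hdef
    have hhc : ∀ i, Continuous (h i) := fun i =>
      ((hg.min continuous_const).sub (hg.min continuous_const)).div_const _
    have hmin_mono : ∀ x (a b : ℝ), a ≤ b → min (g x) a ≤ min (g x) b :=
      fun x a b hab => min_le_min (le_refl _) hab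
    have hh0 : ∀ i x, 0 ≤ h i x := by
      intro i x
      apply div_nonneg _ δpos.le
      have : ((i:ℝ) - 1) * δ ≤ (i:ℝ) * δ := by nlinarith
      linarith [hmin_mono x _ _ this]
    have hh1 : ∀ i x, h i x ≤ 1 := by
      intro i x
      rw [div_le_one δpos]
      rcases le_total (g x) (((i:ℝ) - 1) * δ) with h' | h'
      · have h2 : min (g x) ((i:ℝ)*δ) ≤ g x := min_le_left _ _
        rw [min_eq_left h']
        linarith
      · rw [min_eq_right h']
        have h2 : min (g x) ((i:ℝ)*δ) ≤ (i:ℝ)*δ := min_le_right _ _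
        linarith
    have hhone : ∀ (i : ℕ) (x : Θ), (i:ℝ) * δ ≤ g x → h i x = 1 := by
      intro i x hx
      have h1' : ((i:ℝ) - 1) * δ ≤ g x := by nlinarith
      rw [hdef]
      dsimp only
      rw [min_eq_right hx, min_eq_right h1']
      field_simp
      ring
    have hhzero : ∀ (i : ℕ) (x : Θ), g x ≤ ((i:ℝ) - 1) * δ → h i x = 0 := by
      intro i x hx
      have h1' : g x ≤ (i:ℝ) * δ := by nlinarith
      rw [hdef]
      dsimp only
      rw [min_eq_left hx, min_eq_left h1', sub_self, zero_div]
    have htel : ∀ (k : ℕ) x, ∑ i ∈ Finset.range k, h i x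
        = (min (g x) (((k:ℝ) - 1) * δ) + δ) / δ := by
      intro k x
      have hstep : ∀ i : ℕ, h i x
          = ((fun j : ℕ => min (g x) (((j:ℝ) - 1) * δ)) (i+1)
            - (fun j : ℕ => min (g x) (((j:ℝ) - 1) * δ)) i) / δ := by
        intro i
        dsimp only
        rw [hdef]
        dsimp only
        congr 2
        push_cast
        ring
      rw [Finset.sum_congr rfl fun i _ => hstep i, ← Finset.sum_div,
        Finset.sum_range_sub (fun j : ℕ => min (g x) (((j:ℝ) - 1) * δ)) k]
      have hmin0 : min (g x) ((((0:ℕ):ℝ) - 1) * δ) = -δ := by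
        rw [min_eq_right]
        · push_cast
          ring
        · push_cast
          nlinarith [h0 x]
      rw [hmin0]
      ring_nf
    have hsum_top : ∀ (k : ℕ), m ≤ k → ∀ x,
        ∑ i ∈ Finset.range (k+1), h i x = (g x + δ) / δ := by
      intro k hk x
      rw [htel (k+1) x]
      congr 2
      rw [min_eq_left]
      have : (m:ℝ) ≤ (k:ℝ) := by exact_mod_cast hk
      have : (m:ℝ) * δ ≤ (k:ℝ) * δ := by nlinarith
      have hcast : (((k+1:ℕ)):ℝ) - 1 = (k:ℝ) := by push_cast; ring
      rw [hcast]
      linarith [hgM x]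
    -- the open level sets
    set B : ℕ → Set Θ := fun i => {x | ((i:ℝ) - 1) * δ < g x} with hBdef
    have hBopen : ∀ i, IsOpen (B i) := fun i => isOpen_lt continuous_const hg
    have hind_le : ∀ i x, Set.indicator (B (i+1)) (fun _ => (1:ℝ)) x ≤ h i x := by
      intro i x
      by_cases hx : x ∈ B (i+1)
      · rw [Set.indicator_of_mem hx]
        have : ((i:ℝ)) * δ ≤ g x := by
          have := hx
          rw [hBdef] at this
          simp only [Set.mem_setOf_eq] at this
          push_cast at this ⊢
          linarith
        rw [hhone i x this]
      · rw [Set.indicator_of_notMem hx]; exact hh0 i x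
    have hle_ind : ∀ i x, h i x ≤ Set.indicator (B i) (fun _ => (1:ℝ)) x := by
      intro i x
      by_cases hx : x ∈ B i
      · rw [Set.indicator_of_mem hx]; exact hh1 i x
      · rw [Set.indicator_of_notMem hx]
        rw [hBdef] at hx
        simp only [Set.mem_setOf_eq, not_lt] at hx
        rw [hhzero i x hx]
    have hΛh0 : ∀ i, 0 ≤ Λ (h i) := fun i => hΛ.nonneg _ (hhc i) (hh0 i)
    have hΛh1 : ∀ i, Λ (h i) ≤ 1 := fun i => hΛ.le_one _ (hhc i) (hh1 i)
    -- value of Λ on the full sum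
    have hΛsum : ∀ (k : ℕ), m ≤ k →
        ∑ i ∈ Finset.range (k+1), Λ (h i) = (Λ g + δ) / δ := by
      intro k hk
      rw [← hΛ.sum (k+1) h hhc]
      have he : (fun x => ∑ i ∈ Finset.range (k+1), h i x)
          = fun x => (1/δ) * (g x + δ) := by
        funext x; rw [hsum_top k hk x]; ring
      rw [he, hΛ.smul (1/δ) (fun x => g x + δ) (hg.add continuous_const)]
      have : Λ (fun x => g x + δ) = Λ g + δ := by
        rw [hΛ.add g (fun _ => δ) hg continuous_const, hΛ.const]
      rw [this]; ring
    -- ENNReal-valued indicator functions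
    set ψ : ℕ → Θ → ℝ≥0∞ := fun i => (B i).indicator (fun _ => ENNReal.ofReal δ) with hψdef
    have hψmeas : ∀ i, Measurable (ψ i) :=
      fun i => measurable_const.indicator (hBopen i).measurableSet
    have hψeq : ∀ i x, ψ i x = ENNReal.ofReal (Set.indicator (B i) (fun _ => (1:ℝ)) x * δ) := by
      intro i x
      by_cases hx : x ∈ B i
      · simp [hψdef, Set.indicator_of_mem hx]
      · simp [hψdef, Set.indicator_of_notMem hx]
    have hψint : ∀ i, ∫⁻ x, ψ i x ∂ν = ENNReal.ofReal δ * ν (B i) :=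
      fun i => lintegral_indicator_const (hBopen i).measurableSet _
    constructor
    · -- upper bound
      have hpt : ∀ x, ENNReal.ofReal (g x) + ENNReal.ofReal δ
          ≤ ∑ i ∈ Finset.range (m+2), ψ i x := by
        intro x
        rw [← ENNReal.ofReal_add (h0 x) δpos.le]
        have hreal : g x + δ ≤ ∑ i ∈ Finset.range (m+2),
            Set.indicator (B i) (fun _ => (1:ℝ)) x * δ := by
          have h1' : ∑ i ∈ Finset.range (m+2), h i x * δ
              ≤ ∑ i ∈ Finset.range (m+2), Set.indicator (B i) (fun _ => (1:ℝ)) x * δ :=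
            Finset.sum_le_sum fun i _ => mul_le_mul_of_nonneg_right (hle_ind i x) δpos.le
          have h2' : ∑ i ∈ Finset.range (m+2), h i x * δ = g x + δ := by
            rw [← Finset.sum_mul, hsum_top (m+1) (Nat.le_succ m) x]
            field_simp
          linarith
        calc ENNReal.ofReal (g x + δ)
            ≤ ENNReal.ofReal (∑ i ∈ Finset.range (m+2),
                Set.indicator (B i) (fun _ => (1:ℝ)) x * δ) := ENNReal.ofReal_le_ofReal hreal
          _ = ∑ i ∈ Finset.range (m+2),
                ENNReal.ofReal (Set.indicator (B i) (fun _ => (1:ℝ)) x * δ) := by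
              apply ENNReal.ofReal_sum_of_nonneg
              intro i _
              exact mul_nonneg (Set.indicator_nonneg (fun _ _ => zero_le_one) x) δpos.le
          _ = ∑ i ∈ Finset.range (m+2), ψ i x :=
              Finset.sum_congr rfl fun i _ => (hψeq i x).symm
      have hstep1 : A + ENNReal.ofReal δ
          ≤ ∑ i ∈ Finset.range (m+2), ENNReal.ofReal δ * ν (B i) := by
        have : A + ENNReal.ofReal δ = ∫⁻ x, ENNReal.ofReal (g x) + ENNReal.ofReal δ ∂ν := by
          rw [lintegral_add_right _ measurable_const, lintegral_const, measure_univ, mul_one]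
        rw [this]
        calc ∫⁻ x, ENNReal.ofReal (g x) + ENNReal.ofReal δ ∂ν
            ≤ ∫⁻ x, ∑ i ∈ Finset.range (m+2), ψ i x ∂ν := lintegral_mono hpt
          _ = ∑ i ∈ Finset.range (m+2), ∫⁻ x, ψ i x ∂ν :=
              lintegral_finset_sum _ fun i _ => hψmeas i
          _ = ∑ i ∈ Finset.range (m+2), ENNReal.ofReal δ * ν (B i) :=
              Finset.sum_congr rfl fun i _ => hψint i
      have hν_le : ∀ i, ν (B i) ≤ ENNReal.ofReal (Λ (h (i-1))) := by
        intro i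
        cases i with
        | zero =>
            have hh0eq : h 0 = fun _ => (1:ℝ) := by
              funext x
              apply hhone 0 x
              simpa using h0 x
            have : ν (B 0) ≤ 1 := prob_le_one
            simpa [hh0eq, hΛ.one] using this
        | succ j =>
            have : ν (B (j+1)) ≤ ENNReal.ofReal (Λ (h j)) := by
              apply RZmeasure_open_le hΛ (hBopen (j+1)) (hhc j) (hh0 j)
              intro x hx
              have : (j:ℝ) * δ ≤ g x := by
                rw [hBdef] at hx
                simp only [Set.mem_setOf_eq] at hx
                push_cast at hx ⊢
                linarith
              rw [hhone j x this]
            simpa using this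
      have hstep2 : ∑ i ∈ Finset.range (m+2), ENNReal.ofReal δ * ν (B i)
          ≤ ENNReal.ofReal (Λ g + 2*δ) := by
        calc ∑ i ∈ Finset.range (m+2), ENNReal.ofReal δ * ν (B i)
            ≤ ∑ i ∈ Finset.range (m+2), ENNReal.ofReal δ * ENNReal.ofReal (Λ (h (i-1))) :=
              Finset.sum_le_sum fun i _ => mul_le_mul_right (hν_le i) _
          _ = ∑ i ∈ Finset.range (m+2), ENNReal.ofReal (δ * Λ (h (i-1))) :=
              Finset.sum_congr rfl fun i _ => (ENNReal.ofReal_mul δpos.le).symm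
          _ = ENNReal.ofReal (∑ i ∈ Finset.range (m+2), δ * Λ (h (i-1))) :=
              (ENNReal.ofReal_sum_of_nonneg fun i _ =>
                mul_nonneg δpos.le (hΛh0 _)).symm
          _ ≤ ENNReal.ofReal (Λ g + 2*δ) := by
              apply ENNReal.ofReal_le_ofReal
              rw [← Finset.mul_sum]
              have hshift : ∑ i ∈ Finset.range (m+2), Λ (h (i-1))
                  = (∑ i ∈ Finset.range (m+1), Λ (h i)) + Λ (h 0) := by
                rw [Finset.sum_range_succ']
                simp
              rw [hshift, hΛsum m (le_refl m)]
              have hΛh00 : Λ (h 0) = 1 := by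
                have hh0eq : h 0 = fun _ => (1:ℝ) := by
                  funext x
                  apply hhone 0 x
                  simpa using h0 x
                rw [hh0eq, hΛ.one]
              rw [hΛh00]
              have hδeq : δ * ((Λ g + δ) / δ + 1) = Λ g + 2*δ := by
                field_simp
                ring
              rw [hδeq]
      exact le_trans hstep1 hstep2
    · -- lower bound
      have hν_ge : ∀ i, ENNReal.ofReal (Λ (h (i+2))) ≤ ν (B (i+1)) := by
        intro i
        set K : Set Θ := {x | ((i:ℝ) + 1) * δ ≤ g x} with hKdef
        have hKclosed : IsClosed K := isClosed_le continuous_const hg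
        apply le_RZmeasure_open hΛ (hBopen (i+1)) (hhc (i+2)) (hh0 (i+2)) (hh1 (i+2))
          (K := K) hKclosed.isCompact
        · intro x hx
          rw [hKdef]
          simp only [Set.mem_setOf_eq]
          by_contra hcon
          push_neg at hcon
          apply hx
          apply hhzero (i+2) x
          push_cast
          linarith
        · intro x hx
          rw [hKdef] at hx
          simp only [Set.mem_setOf_eq] at hx
          rw [hBdef]
          simp only [Set.mem_setOf_eq]
          push_cast
          nlinarith
      have hpt : ∀ x, ∑ i ∈ Finset.range (m+2), (B (i+1)).indicator
          (fun _ => ENNReal.ofReal δ) x ≤ ENNReal.ofReal (g x) + ENNReal.ofReal δ := by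
        intro x
        rw [← ENNReal.ofReal_add (h0 x) δpos.le]
        have hreal : ∑ i ∈ Finset.range (m+2),
            Set.indicator (B (i+1)) (fun _ => (1:ℝ)) x * δ ≤ g x + δ := by
          have h1' : ∑ i ∈ Finset.range (m+2),
              Set.indicator (B (i+1)) (fun _ => (1:ℝ)) x * δ
              ≤ ∑ i ∈ Finset.range (m+2), h i x * δ :=
            Finset.sum_le_sum fun i _ => mul_le_mul_of_nonneg_right (hind_le i x) δpos.le
          have h2' : ∑ i ∈ Finset.range (m+2), h i x * δ = g x + δ := by
            rw [← Finset.sum_mul, hsum_top (m+1) (Nat.le_succ m) x]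
            field_simp
          linarith
        calc ∑ i ∈ Finset.range (m+2), (B (i+1)).indicator (fun _ => ENNReal.ofReal δ) x
            = ∑ i ∈ Finset.range (m+2),
                ENNReal.ofReal (Set.indicator (B (i+1)) (fun _ => (1:ℝ)) x * δ) := by
              refine Finset.sum_congr rfl fun i _ => ?_
              by_cases hx : x ∈ B (i+1)
              · simp [Set.indicator_of_mem hx]
              · simp [Set.indicator_of_notMem hx]
          _ = ENNReal.ofReal (∑ i ∈ Finset.range (m+2),
                Set.indicator (B (i+1)) (fun _ => (1:ℝ)) x * δ) :=
              (ENNReal.ofReal_sum_of_nonneg fun i _ =>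
                mul_nonneg (Set.indicator_nonneg (fun _ _ => zero_le_one) x) δpos.le).symm
          _ ≤ ENNReal.ofReal (g x + δ) := ENNReal.ofReal_le_ofReal hreal
      have hstep1 : ∑ i ∈ Finset.range (m+2), ENNReal.ofReal δ * ν (B (i+1))
          ≤ A + ENNReal.ofReal δ := by
        have hr : A + ENNReal.ofReal δ = ∫⁻ x, ENNReal.ofReal (g x) + ENNReal.ofReal δ ∂ν := by
          rw [lintegral_add_right _ measurable_const, lintegral_const, measure_univ, mul_one]
        rw [hr]
        calc ∑ i ∈ Finset.range (m+2), ENNReal.ofReal δ * ν (B (i+1))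
            = ∑ i ∈ Finset.range (m+2),
                ∫⁻ x, (B (i+1)).indicator (fun _ => ENNReal.ofReal δ) x ∂ν :=
              Finset.sum_congr rfl fun i _ =>
                (lintegral_indicator_const (hBopen (i+1)).measurableSet _).symm
          _ = ∫⁻ x, ∑ i ∈ Finset.range (m+2),
                (B (i+1)).indicator (fun _ => ENNReal.ofReal δ) x ∂ν :=
              (lintegral_finset_sum _ fun i _ =>
                measurable_const.indicator (hBopen (i+1)).measurableSet).symm
          _ ≤ ∫⁻ x, ENNReal.ofReal (g x) + ENNReal.ofReal δ ∂ν := lintegral_mono hpt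
      have hstep2 : ENNReal.ofReal (Λ g - δ)
          ≤ ∑ i ∈ Finset.range (m+2), ENNReal.ofReal δ * ν (B (i+1)) := by
        calc ENNReal.ofReal (Λ g - δ)
            ≤ ENNReal.ofReal (∑ i ∈ Finset.range (m+2), δ * Λ (h (i+2))) := by
              apply ENNReal.ofReal_le_ofReal
              rw [← Finset.mul_sum]
              have hsplit : ∑ i ∈ Finset.range (m+4), Λ (h i)
                  = (∑ i ∈ Finset.range 2, Λ (h i))
                    + ∑ i ∈ Finset.range (m+2), Λ (h (2+i)) := by
                have h24 : 2 + (m+2) = m+4 := by omega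
                have := Finset.sum_range_add (fun i => Λ (h i)) 2 (m+2)
                rw [h24] at this
                exact this
              have hfull : ∑ i ∈ Finset.range (m+4), Λ (h i) = (Λ g + δ)/δ := by
                have := hΛsum (m+3) (by omega)
                simpa using this
              have h2sum : ∑ i ∈ Finset.range 2, Λ (h i) ≤ 2 := by
                rw [Finset.sum_range_succ, Finset.sum_range_one]
                linarith [hΛh1 0, hΛh1 1]
              have hcomm : ∑ i ∈ Finset.range (m+2), Λ (h (2+i))
                  = ∑ i ∈ Finset.range (m+2), Λ (h (i+2)) := by
                refine Finset.sum_congr rfl fun i _ => ?_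
                rw [Nat.add_comm]
              have : ∑ i ∈ Finset.range (m+2), Λ (h (i+2)) ≥ (Λ g + δ)/δ - 2 := by
                rw [← hcomm]
                linarith [hsplit, hfull, h2sum]
              have hδ : δ * ((Λ g + δ)/δ - 2) = Λ g - δ := by field_simp; ring
              nlinarith
          _ = ∑ i ∈ Finset.range (m+2), ENNReal.ofReal (δ * Λ (h (i+2))) :=
              ENNReal.ofReal_sum_of_nonneg fun i _ => mul_nonneg δpos.le (hΛh0 _)
          _ = ∑ i ∈ Finset.range (m+2), ENNReal.ofReal δ * ENNReal.ofReal (Λ (h (i+2))) :=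
              Finset.sum_congr rfl fun i _ => ENNReal.ofReal_mul δpos.le
          _ ≤ ∑ i ∈ Finset.range (m+2), ENNReal.ofReal δ * ν (B (i+1)) :=
              Finset.sum_le_sum fun i _ => mul_le_mul_right (hν_ge i) _
      exact le_trans hstep2 hstep1
  -- conclude
  have hΛg0 : 0 ≤ Λ g := hΛ.nonneg g hg h0
  have hAfin : A ≠ ⊤ := by
    have h1 := (main 1 one_pos).1
    intro htop
    rw [htop] at h1
    simp at h1
  have haA : A = ENNReal.ofReal A.toReal := (ENNReal.ofReal_toReal hAfin).symm
  have ha0 : 0 ≤ A.toReal := ENNReal.toReal_nonneg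
  have hup : ∀ δ : ℝ, 0 < δ → A.toReal ≤ Λ g + δ := by
    intro δ δpos
    have h1 := (main δ δpos).1
    rw [haA, ← ENNReal.ofReal_add ha0 δpos.le] at h1
    have := (ENNReal.ofReal_le_ofReal_iff (by linarith)).mp h1
    linarith
  have hlow : ∀ δ : ℝ, 0 < δ → Λ g ≤ A.toReal + 2*δ := by
    intro δ δpos
    have h1 := (main δ δpos).2
    rw [haA, ← ENNReal.ofReal_add ha0 δpos.le] at h1
    have := (ENNReal.ofReal_le_ofReal_iff (by linarith)).mp h1
    linarith
  have heq : A.toReal = Λ g := by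
    apply le_antisymm
    · apply le_of_forall_pos_le_add
      intro ε hε
      exact hup ε hε
    · apply le_of_forall_pos_le_add
      intro ε hε
      have := hlow (ε/2) (by linarith)
      linarith
  rw [haA, heq]

end RMK3
section RMK4

variable {Θ : Type*} [MetricSpace Θ] [CompactSpace Θ] [Nonempty Θ]
  [MeasurableSpace Θ] [BorelSpace Θ]
variable {Λ : (Θ → ℝ) → ℝ} {r : Θ → Θ}

/-- If `Λ` is a positive normalized `r`-invariant functional and `μ` is the unique invariant
probability measure of `r`, then `Λ` is integration against `μ`. -/
theorem lam_eq_integral (hΛ : IsPosFunctional Λ) (hr : Continuous r)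
    (hinv : ∀ g : Θ → ℝ, Continuous g → Λ (fun x => g (r x)) = Λ g)
    {μ : Measure Θ} (hμ : IsProbabilityMeasure μ) (hμinv : μ.map r = μ)
    (huniq : ∀ ν : Measure Θ, IsProbabilityMeasure ν ∧ ν.map r = ν → ν = μ) :
    ∀ g : Θ → ℝ, Continuous g → Λ g = ∫ x, g x ∂μ := by
  classical
  set ν := RZmeasure hΛ with hνdef
  have hνlint : ∀ g : Θ → ℝ, Continuous g → (∀ x, 0 ≤ g x) →
      ∫⁻ x, ENNReal.ofReal (g x) ∂ν = ENNReal.ofReal (Λ g) :=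
    fun g hg h0 => RZmeasure_lintegral hΛ g hg h0
  have hνprob : IsProbabilityMeasure ν := inferInstance
  -- invariance of ν
  have hmap : ν.map r = ν := by
    have hmapprob : IsProbabilityMeasure (ν.map r) := Measure.isProbabilityMeasure_map hr.measurable.aemeasurable
    apply ext_of_forall_lintegral_eq_of_IsFiniteMeasure
    intro f
    have hco : ∀ x : Θ, ((f x : ℝ≥0) : ℝ≥0∞) = ENNReal.ofReal ((f x : ℝ)) := by
      intro x
      rw [ENNReal.ofReal_coe_nnreal]
    have hgc : Continuous fun x : Θ => ((f x : ℝ)) := by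
      exact NNReal.continuous_coe.comp f.continuous
    have hg0 : ∀ x : Θ, (0:ℝ) ≤ ((f x : ℝ)) := fun x => (f x).coe_nonneg
    have hl : ∫⁻ x, ((f x : ℝ≥0) : ℝ≥0∞) ∂(ν.map r) = ∫⁻ x, ((f (r x) : ℝ≥0) : ℝ≥0∞) ∂ν := by
      exact lintegral_map (μ := ν) (f := fun x => ((f x : ℝ≥0) : ℝ≥0∞))
        (by exact measurable_coe_nnreal_ennreal.comp f.continuous.measurable) hr.measurable
    rw [hl]
    calc ∫⁻ x, ((f (r x) : ℝ≥0) : ℝ≥0∞) ∂ν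
        = ∫⁻ x, ENNReal.ofReal ((f (r x) : ℝ)) ∂ν := by
          refine lintegral_congr fun x => hco (r x)
      _ = ENNReal.ofReal (Λ (fun x => (f (r x) : ℝ))) :=
          hνlint _ (hgc.comp hr) (fun x => hg0 (r x))
      _ = ENNReal.ofReal (Λ (fun x => (f x : ℝ))) := by rw [hinv _ hgc]
      _ = ∫⁻ x, ENNReal.ofReal ((f x : ℝ)) ∂ν := (hνlint _ hgc hg0).symm
      _ = ∫⁻ x, ((f x : ℝ≥0) : ℝ≥0∞) ∂ν := by
          refine lintegral_congr fun x => (hco x).symm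
  have hνμ : ν = μ := huniq ν ⟨hνprob, hmap⟩
  -- now compute integrals
  have hint : ∀ g : Θ → ℝ, Continuous g → Integrable g μ := by
    intro g hg
    have : HasCompactSupport g := by
      rw [HasCompactSupport]
      exact IsCompact.of_isClosed_subset isCompact_univ (isClosed_tsupport g) (Set.subset_univ _)
    exact hg.integrable_of_hasCompactSupport this
  have hnonneg_case : ∀ g : Θ → ℝ, Continuous g → (∀ x, 0 ≤ g x) → Λ g = ∫ x, g x ∂μ := by
    intro g hg h0
    have h1 : ENNReal.ofReal (∫ x, g x ∂μ) = ∫⁻ x, ENNReal.ofReal (g x) ∂μ :=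
      ofReal_integral_eq_lintegral_ofReal (hint g hg) (Filter.Eventually.of_forall h0)
    have h2 : ∫⁻ x, ENNReal.ofReal (g x) ∂μ = ENNReal.ofReal (Λ g) := by
      rw [← hνμ]
      exact hνlint g hg h0
    have h3 : ENNReal.ofReal (∫ x, g x ∂μ) = ENNReal.ofReal (Λ g) := by rw [h1, h2]
    have h4 : (0:ℝ) ≤ ∫ x, g x ∂μ := integral_nonneg h0
    have h5 : (0:ℝ) ≤ Λ g := hΛ.nonneg g hg h0
    have := (ENNReal.ofReal_eq_ofReal_iff h4 h5).mp h3
    linarith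
  intro g hg
  -- shift by a constant to make it nonnegative
  obtain ⟨z, -, hz⟩ := isCompact_univ.exists_isMinOn Set.univ_nonempty hg.continuousOn
  replace hz : ∀ x, g z ≤ g x := fun x => hz (Set.mem_univ x)
  set c : ℝ := max (-(g z)) 0 with hc
  have hc0 : 0 ≤ c := le_max_right _ _
  have hgc0 : ∀ x, 0 ≤ g x + c := by
    intro x
    have h1 : -(g z) ≤ c := le_max_left _ _
    have := hz x
    linarith
  have h1 : Λ (fun x => g x + c) = Λ g + c := by
    rw [hΛ.add g (fun _ => c) hg continuous_const, hΛ.const]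
  have h2 : ∫ x, (g x + c) ∂μ = (∫ x, g x ∂μ) + c := by
    rw [integral_add (hint g hg) (integrable_const c), integral_const]
    simp [hμ.measure_univ]
  have h3 := hnonneg_case (fun x => g x + c) (hg.add continuous_const) hgc0
  rw [h1, h2] at h3
  linarith

end RMK4
section ULim

/-- Limit of a sequence along an ultrafilter. -/
noncomputable def ulim (U : Ultrafilter ℕ) (a : ℕ → ℝ) : ℝ := limUnder (U : Filter ℕ) a

lemma ulim_spec (U : Ultrafilter ℕ) {a : ℕ → ℝ} (h : ∃ C : ℝ, ∀ n, |a n| ≤ C) :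
    Tendsto a (U : Filter ℕ) (𝓝 (ulim U a)) := by
  obtain ⟨C, hC⟩ := h
  have hmem : (U.map a : Filter ℝ) ≤ 𝓟 (Set.Icc (-C) C) := by
    rw [le_principal_iff]
    have : ∀ n, a n ∈ Set.Icc (-C) C := fun n => abs_le.mp (hC n)
    exact Filter.mem_map.mpr (Filter.univ_mem' this)
  obtain ⟨x, -, hx⟩ := isCompact_Icc.ultrafilter_le_nhds (U.map a) hmem
  exact tendsto_nhds_limUnder ⟨x, hx⟩

end ULim

section Emp

variable {Θ : Type*} [MetricSpace Θ] [CompactSpace Θ] [Nonempty Θ]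
  [MeasurableSpace Θ] [BorelSpace Θ]

/-- Empirical Birkhoff average along an orbit segment starting at `s N`. -/
noncomputable def emp (r : Θ → Θ) (s : ℕ → Θ) (N : ℕ) (g : Θ → ℝ) : ℝ :=
  (∑ j ∈ Finset.range N, g (r^[j] (s N))) / N

lemma cont_bound {g : Θ → ℝ} (hg : Continuous g) : ∃ C : ℝ, 0 ≤ C ∧ ∀ x, |g x| ≤ C := by
  obtain ⟨z, -, hz⟩ := isCompact_univ.exists_isMaxOn Set.univ_nonempty (hg.abs).continuousOn
  exact ⟨|g z|, abs_nonneg _, fun x => hz (Set.mem_univ x)⟩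

lemma emp_abs_le {r : Θ → Θ} {s : ℕ → Θ} {g : Θ → ℝ} {C : ℝ} (hC0 : 0 ≤ C)
    (hC : ∀ x, |g x| ≤ C) (N : ℕ) : |emp r s N g| ≤ C := by
  rcases Nat.eq_zero_or_pos N with hN | hN
  · simp [emp, hN, hC0]
  · rw [emp, abs_div, abs_of_nonneg (Nat.cast_nonneg N : (0:ℝ) ≤ N),
      div_le_iff₀ (by exact_mod_cast hN : (0:ℝ) < N)]
    calc |∑ j ∈ Finset.range N, g (r^[j] (s N))| ≤ ∑ j ∈ Finset.range N, |g (r^[j] (s N))| :=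
          Finset.abs_sum_le_sum_abs _ _
      _ ≤ ∑ _j ∈ Finset.range N, C := Finset.sum_le_sum fun j _ => hC _
      _ = C * N := by rw [Finset.sum_const, Finset.card_range]; ring

lemma emp_bounded {r : Θ → Θ} {s : ℕ → Θ} {g : Θ → ℝ} (hg : Continuous g) :
    ∃ C : ℝ, ∀ N, |emp r s N g| ≤ C := by
  obtain ⟨C, hC0, hC⟩ := cont_bound hg
  exact ⟨C, emp_abs_le hC0 hC⟩

variable (r : Θ → Θ) (s : ℕ → Θ)

/-- The empirical limit functional along an ultrafilter. -/
noncomputable def empLam (U : Ultrafilter ℕ) (g : Θ → ℝ) : ℝ :=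
  ulim U (fun N => emp r s N g)

lemma empLam_spec (U : Ultrafilter ℕ) {g : Θ → ℝ} (hg : Continuous g) :
    Tendsto (fun N => emp r s N g) (U : Filter ℕ) (𝓝 (empLam r s U g)) :=
  ulim_spec U (emp_bounded hg)

lemma empLam_posFunctional (U : Ultrafilter ℕ) (hU : (U : Filter ℕ) ≤ atTop) :
    IsPosFunctional (empLam r s U) := by
  constructor
  · intro g h hg hh
    have he : ∀ N, emp r s N (fun x => g x + h x) = emp r s N g + emp r s N h := by
      intro N
      rw [emp, emp, emp, ← add_div, ← Finset.sum_add_distrib]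
    refine tendsto_nhds_unique (empLam_spec r s U (hg.add hh)) ?_
    have := (empLam_spec r s U hg).add (empLam_spec r s U hh)
    exact this.congr fun N => (he N).symm
  · intro c g hg
    have he : ∀ N, emp r s N (fun x => c * g x) = c * emp r s N g := by
      intro N
      rw [emp, emp, ← Finset.mul_sum, mul_div_assoc]
    refine tendsto_nhds_unique (empLam_spec r s U (continuous_const.mul hg)) ?_
    exact ((empLam_spec r s U hg).const_mul c).congr fun N => (he N).symm
  · intro g h hg hh hle
    refine le_of_tendsto_of_tendsto' (empLam_spec r s U hg) (empLam_spec r s U hh) fun N => ?_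
    rcases Nat.eq_zero_or_pos N with hN | hN
    · simp [emp, hN]
    · rw [emp, emp, div_le_div_iff_of_pos_right (by exact_mod_cast hN : (0:ℝ) < N)]
      exact Finset.sum_le_sum fun j _ => hle _
  · refine tendsto_nhds_unique (empLam_spec r s U continuous_const) ?_
    have hev : ∀ᶠ N in (U : Filter ℕ), emp r s N (fun _ => (1:ℝ)) = 1 := by
      apply hU
      filter_upwards [eventually_ge_atTop 1] with N hN
      rw [emp]
      simp only [Finset.sum_const, Finset.card_range, nsmul_eq_mul, mul_one]
      have hN0 : (N:ℝ) ≠ 0 := by positivity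
      exact div_self hN0
    exact tendsto_const_nhds.congr' (by filter_upwards [hev] with N h; exact h.symm)

lemma empLam_inv (hr : Continuous r) (U : Ultrafilter ℕ) (hU : (U : Filter ℕ) ≤ atTop)
    {g : Θ → ℝ} (hg : Continuous g) :
    empLam r s U (fun x => g (r x)) = empLam r s U g := by
  obtain ⟨C, hC0, hC⟩ := cont_bound hg
  have hdiff : ∀ N : ℕ, 1 ≤ N → |emp r s N (fun x => g (r x)) - emp r s N g| ≤ 2*C/N := by
    intro N hN
    have hNpos : (0:ℝ) < N := by exact_mod_cast hN
    set θ := s N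
    have hterm : ∀ j : ℕ, (fun x => g (r x)) (r^[j] θ) = g (r^[j+1] θ) := by
      intro j
      simp [Function.iterate_succ_apply']
    have h1 := Finset.sum_range_succ' (fun j => g (r^[j] θ)) N
    have h2 := Finset.sum_range_succ (fun j => g (r^[j] θ)) N
    have hsum : ∑ j ∈ Finset.range N, (fun x => g (r x)) (r^[j] θ)
        = ∑ j ∈ Finset.range N, g (r^[j] θ) + g (r^[N] θ) - g (r^[0] θ) := by
      rw [Finset.sum_congr rfl fun j _ => hterm j]
      have := h1.symm.trans h2
      linarith [this]
    rw [emp, emp, hsum]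
    rw [div_sub_div_same]
    have : ∑ j ∈ Finset.range N, g (r^[j] θ) + g (r^[N] θ) - g (r^[0] θ)
        - ∑ j ∈ Finset.range N, g (r^[j] θ) = g (r^[N] θ) - g (r^[0] θ) := by ring
    rw [this, abs_div, abs_of_nonneg hNpos.le, div_le_div_iff_of_pos_right hNpos]
    calc |g (r^[N] θ) - g (r^[0] θ)| ≤ |g (r^[N] θ)| + |g (r^[0] θ)| := abs_sub _ _
      _ ≤ 2*C := by linarith [hC (r^[N] θ), hC (r^[0] θ)]
  have htend0 : Tendsto (fun N : ℕ => emp r s N (fun x => g (r x)) - emp r s N g)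
      atTop (𝓝 0) := by
    apply squeeze_zero_norm' _ (by
      simpa using (tendsto_const_div_atTop_nhds_zero_nat (2*C)))
    filter_upwards [eventually_ge_atTop 1] with N hN
    exact hdiff N hN
  have h1 : Tendsto (fun N => emp r s N g
      + (emp r s N (fun x => g (r x)) - emp r s N g)) (U : Filter ℕ)
      (𝓝 (empLam r s U g + 0)) :=
    (empLam_spec r s U hg).add (htend0.mono_left hU)
  rw [add_zero] at h1
  refine tendsto_nhds_unique (empLam_spec r s U (hg.comp hr)) (h1.congr fun N => by ring)

end Emp
section Fib

variable {Θ : Type*} {r : Θ → Θ} {F : Θ → ℝ → ℝ}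

lemma fibIter_zero (θ : Θ) (x : ℝ) : fibIter r F 0 θ x = x := rfl

lemma fibIter_succ (n : ℕ) (θ : Θ) (x : ℝ) :
    fibIter r F (n+1) θ x = F (r^[n] θ) (fibIter r F n θ x) := rfl

variable (hFper : ∀ θ (x : ℝ) (k : ℤ), F θ (x + k) = F θ x + k)
variable (hFmono : ∀ θ, Monotone (F θ))

include hFper in
lemma fibIter_add_int (n : ℕ) (θ : Θ) (x : ℝ) (k : ℤ) :
    fibIter r F n θ (x + k) = fibIter r F n θ x + k := by
  induction n with
  | zero => rfl
  | succ n ih => rw [fibIter_succ, ih, hFper, fibIter_succ]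

include hFmono in
lemma fibIter_mono (n : ℕ) (θ : Θ) : Monotone (fun x => fibIter r F n θ x) := by
  induction n with
  | zero => exact monotone_id
  | succ n ih => exact fun x y hxy => hFmono _ (ih hxy)

include hFper hFmono in
/-- deviation across the fibre is at most 1 -/
lemma fibIter_dev (n : ℕ) (θ : Θ) (x : ℝ) :
    |fibIter r F n θ x - x - fibIter r F n θ 0| ≤ 1 := by
  set k : ℤ := ⌊x⌋ with hk
  have hk1 : (k:ℝ) ≤ x := Int.floor_le x
  have hk2 : x < (k:ℝ) + 1 := Int.lt_floor_add_one x
  have hlow : fibIter r F n θ 0 + (k:ℝ) ≤ fibIter r F n θ x := by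
    have h1 : fibIter r F n θ ((0:ℝ) + k) = fibIter r F n θ 0 + k :=
      fibIter_add_int (r := r) hFper n θ 0 k
    rw [zero_add] at h1
    rw [← h1]
    exact fibIter_mono hFmono n θ hk1
  have hhigh : fibIter r F n θ x ≤ fibIter r F n θ 0 + (k:ℝ) + 1 := by
    have h1 := fibIter_add_int (r := r) hFper n θ 0 (k+1)
    push_cast at h1
    rw [zero_add] at h1
    have h2 : fibIter r F n θ x ≤ fibIter r F n θ ((k:ℝ)+1) := fibIter_mono hFmono n θ hk2.le
    rw [h1] at h2
    linarith
  rw [abs_le]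
  constructor <;> nlinarith

lemma fibIter_comp (n m : ℕ) (θ : Θ) (x : ℝ) :
    fibIter r F (n + m) θ x = fibIter r F m (r^[n] θ) (fibIter r F n θ x) := by
  induction m with
  | zero => rfl
  | succ m ih =>
      have h1 : n + (m+1) = (n + m) + 1 := by ring
      rw [h1, fibIter_succ, ih, fibIter_succ]
      congr 1
      rw [← Function.iterate_add_apply]
      congr 1
      omega

include hFper hFmono in
lemma fibIter_cocycle (n m : ℕ) (θ : Θ) :
    |fibIter r F (n + m) θ 0 - fibIter r F n θ 0 - fibIter r F m (r^[n] θ) 0| ≤ 1 := by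
  have h1 := fibIter_comp (r := r) (F := F) n m θ 0
  have h2 := fibIter_dev (r := r) hFper hFmono m (r^[n] θ) (fibIter r F n θ 0)
  rw [← h1] at h2
  have : fibIter r F (n+m) θ 0 - fibIter r F n θ 0 - fibIter r F m (r^[n] θ) 0
      = fibIter r F (n+m) θ 0 - fibIter r F n θ 0 - (fibIter r F m (r^[n] θ) 0) := by ring
  exact h2

end Fib

section FibTop

variable {Θ : Type*} [TopologicalSpace Θ] {r : Θ → Θ} {F : Θ → ℝ → ℝ}

lemma fibIter_cont (hr : Continuous r) (hFc : Continuous fun p : Θ × ℝ => F p.1 p.2) (n : ℕ) :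
    Continuous fun θ => fibIter r F n θ 0 := by
  induction n with
  | zero => exact continuous_const
  | succ n ih =>
      have heq : (fun θ => fibIter r F (n+1) θ 0)
          = fun θ => F (r^[n] θ) (fibIter r F n θ 0) := rfl
      rw [heq]
      exact hFc.comp ((hr.iterate n).prodMk ih)

lemma exists_dispBound [CompactSpace Θ] [Nonempty Θ]
    (hFc : Continuous fun p : Θ × ℝ => F p.1 p.2)
    (hFper : ∀ θ (x : ℝ) (k : ℤ), F θ (x + k) = F θ x + k) :
    ∃ B : ℝ, 0 ≤ B ∧ ∀ θ x, |F θ x - x| ≤ B := by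
  set Φ : Θ × ℝ → ℝ := fun p => F p.1 p.2 - p.2 with hΦ
  have hΦc : Continuous Φ := hFc.sub continuous_snd
  have hK : IsCompact ((Set.univ : Set Θ) ×ˢ Set.Icc (0:ℝ) 1) := isCompact_univ.prod isCompact_Icc
  have hne : ((Set.univ : Set Θ) ×ˢ Set.Icc (0:ℝ) 1).Nonempty :=
    ⟨(Classical.arbitrary Θ, 0), by simp⟩
  obtain ⟨z, -, hz⟩ := hK.exists_isMaxOn hne hΦc.abs.continuousOn
  refine ⟨|Φ z|, abs_nonneg _, fun θ x => ?_⟩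
  have hx : Int.fract x + (⌊x⌋ : ℝ) = x := by
    rw [add_comm]
    exact Int.floor_add_fract x
  have hfr : F θ x - x = Φ (θ, Int.fract x) := by
    conv_lhs => rw [← hx]
    rw [hFper θ (Int.fract x) ⌊x⌋, hΦ]
    dsimp only
    ring
  rw [hfr]
  have hmem : (θ, Int.fract x) ∈ (Set.univ : Set Θ) ×ˢ Set.Icc (0:ℝ) 1 := by
    refine ⟨Set.mem_univ _, ?_, ?_⟩
    · exact Int.fract_nonneg x
    · exact (Int.fract_lt_one x).le
  exact hz hmem

lemma fibIter_zero_bound {B : ℝ} (hB0 : 0 ≤ B) (hB : ∀ θ x, |F θ x - x| ≤ B) (n : ℕ) (θ : Θ) :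
    |fibIter r F n θ 0| ≤ n * B := by
  induction n with
  | zero => simp [fibIter_zero]
  | succ n ih =>
      rw [fibIter_succ]
      have h1 := hB (r^[n] θ) (fibIter r F n θ 0)
      have h2 : |F (r^[n] θ) (fibIter r F n θ 0)|
          ≤ |F (r^[n] θ) (fibIter r F n θ 0) - fibIter r F n θ 0| + |fibIter r F n θ 0| := by
        have := abs_add_le (F (r^[n] θ) (fibIter r F n θ 0) - fibIter r F n θ 0) (fibIter r F n θ 0)
        simpa using this
      push_cast
      nlinarith

end FibTop
section Core

variable {Θ : Type*} [MetricSpace Θ] [CompactSpace Θ] [Nonempty Θ]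
  [MeasurableSpace Θ] [BorelSpace Θ]

set_option maxHeartbeats 2000000 in
theorem exists_rho (r : Θ → Θ) (hr : Continuous r)
    (hUE : ∃! μ : Measure Θ, IsProbabilityMeasure μ ∧ μ.map r = μ)
    (F : Θ → ℝ → ℝ) (hFc : Continuous fun p : Θ × ℝ => F p.1 p.2)
    (hFper : ∀ θ (x : ℝ) (k : ℤ), F θ (x + k) = F θ x + k)
    (hFmono : ∀ θ, Monotone (F θ)) :
    ∃ ρ : ℝ, ∀ ε > 0, ∀ᶠ n : ℕ in atTop, ∀ θ (x : ℝ),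
      |(fibIter r F n θ x - x)/n - ρ| < ε := by
  classical
  obtain ⟨μ, ⟨hμprob, hμinv⟩, huniq⟩ := hUE
  have huniq' : ∀ ν : Measure Θ, IsProbabilityMeasure ν ∧ ν.map r = ν → ν = μ :=
    fun ν h => huniq ν h
  obtain ⟨B, hB0, hB⟩ := exists_dispBound hFc hFper
  set u : ℕ → Θ → ℝ := fun n θ => fibIter r F n θ 0 with hu
  have hucont : ∀ n, Continuous (u n) := fun n => fibIter_cont hr hFc n
  have hubound : ∀ (n : ℕ) θ, |u n θ| ≤ n*B := fun n θ => fibIter_zero_bound hB0 hB n θ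
  have hcoc : ∀ (n m : ℕ) θ, |u (n+m) θ - u n θ - u m (r^[n] θ)| ≤ 1 :=
    fun n m θ => fibIter_cocycle hFper hFmono n m θ
  have hu0 : ∀ θ, u 0 θ = 0 := fun θ => rfl
  -- maximizing and minimizing selectors
  have hmaxsel : ∀ N : ℕ, ∃ θ, ∀ θ', u N θ' ≤ u N θ := by
    intro N
    obtain ⟨z, -, hz⟩ := isCompact_univ.exists_isMaxOn Set.univ_nonempty (hucont N).continuousOn
    exact ⟨z, fun θ' => hz (Set.mem_univ θ')⟩
  have hminsel : ∀ N : ℕ, ∃ θ, ∀ θ', u N θ ≤ u N θ' := by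
    intro N
    obtain ⟨z, -, hz⟩ := isCompact_univ.exists_isMinOn Set.univ_nonempty (hucont N).continuousOn
    exact ⟨z, fun θ' => hz (Set.mem_univ θ')⟩
  set smax : ℕ → Θ := fun N => (hmaxsel N).choose with hsmaxdef
  have hsmax : ∀ N θ', u N θ' ≤ u N (smax N) := fun N => (hmaxsel N).choose_spec
  set smin : ℕ → Θ := fun N => (hminsel N).choose with hsmindef
  have hsmin : ∀ N θ', u N (smin N) ≤ u N θ' := fun N => (hminsel N).choose_spec
  set S : ℕ → ℝ := fun N => u N (smax N) with hS
  set I : ℕ → ℝ := fun N => u N (smin N) with hI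
  have hIS : ∀ N, I N ≤ S N := fun N => le_trans (hsmin N (smax N)) (le_refl _)
  have hSbound : ∀ N, |S N| ≤ N*B := fun N => hubound N _
  have hIbound : ∀ N, |I N| ≤ N*B := fun N => hubound N _
  -- subadditivity
  have hsubS : Subadditive (fun N => S N + 1) := by
    intro a b
    have h := hcoc a b (smax (a+b))
    have h2 : u (a+b) (smax (a+b)) ≤ u a (smax (a+b)) + u b (r^[a] (smax (a+b))) + 1 := by
      have := (abs_le.mp h).2
      linarith
    have h3 := hsmax a (smax (a+b))
    have h4 := hsmax b (r^[a] (smax (a+b)))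
    show S (a+b) + 1 ≤ (S a + 1) + (S b + 1)
    rw [hS]
    dsimp only
    linarith
  have hsubI : Subadditive (fun N => 1 - I N) := by
    intro a b
    have h := hcoc a b (smin (a+b))
    have h2 : u a (smin (a+b)) + u b (r^[a] (smin (a+b))) - 1 ≤ u (a+b) (smin (a+b)) := by
      have := (abs_le.mp h).1
      linarith
    have h3 := hsmin a (smin (a+b))
    have h4 := hsmin b (r^[a] (smin (a+b)))
    show 1 - I (a+b) ≤ (1 - I a) + (1 - I b)
    rw [hI]
    dsimp only
    linarith
  have hbddS : BddBelow (Set.range fun n : ℕ => (S n + 1)/n) := by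
    refine ⟨-B, ?_⟩
    rintro x ⟨n, rfl⟩
    rcases Nat.eq_zero_or_pos n with hn | hn
    · simp [hn]
      linarith
    · have hnpos : (0:ℝ) < n := by exact_mod_cast hn
      rw [le_div_iff₀ hnpos]
      have h1 := (abs_le.mp (hSbound n)).1
      nlinarith
  have hbddI : BddBelow (Set.range fun n : ℕ => (1 - I n)/n) := by
    refine ⟨-B, ?_⟩
    rintro x ⟨n, rfl⟩
    rcases Nat.eq_zero_or_pos n with hn | hn
    · simp [hn]
      linarith
    · have hnpos : (0:ℝ) < n := by exact_mod_cast hn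
      rw [le_div_iff₀ hnpos]
      have h1 := (abs_le.mp (hIbound n)).2
      nlinarith
  set L : ℝ := hsubS.lim with hL
  set Lneg : ℝ := hsubI.lim with hLneg
  set l : ℝ := -Lneg with hl
  have hLtend : Tendsto (fun n : ℕ => (S n + 1)/n) atTop (𝓝 L) := hsubS.tendsto_lim hbddS
  have hItend : Tendsto (fun n : ℕ => (I n - 1)/n) atTop (𝓝 l) := by
    have h1 : Tendsto (fun n : ℕ => (1 - I n)/n) atTop (𝓝 Lneg) := hsubI.tendsto_lim hbddI
    have h2 := h1.neg
    rw [← hl] at h2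
    refine h2.congr fun n => ?_
    rw [← neg_div]
    ring_nf
  have hSge : ∀ N : ℕ, 1 ≤ N → (N:ℝ)*L - 1 ≤ S N := by
    intro N hN
    have hnpos : (0:ℝ) < N := by exact_mod_cast hN
    have := hsubS.lim_le_div hbddS (n := N) (by omega)
    rw [le_div_iff₀ hnpos] at this
    rw [← hL] at this
    nlinarith
  have hIle : ∀ N : ℕ, 1 ≤ N → I N ≤ (N:ℝ)*l + 1 := by
    intro N hN
    have hnpos : (0:ℝ) < N := by exact_mod_cast hN
    have := hsubI.lim_le_div hbddI (n := N) (by omega)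
    rw [le_div_iff₀ hnpos] at this
    rw [← hLneg] at this
    rw [hl]
    nlinarith
  have hlL : l ≤ L := by
    refine le_of_tendsto_of_tendsto' hItend hLtend fun n => ?_
    rcases Nat.eq_zero_or_pos n with hn | hn
    · simp [hn]
    · have hnpos : (0:ℝ) < n := by exact_mod_cast hn
      rw [div_le_div_iff_of_pos_right hnpos]
      linarith [hIS n]
  -- the key inequality via unique ergodicity
  have hkey : ∀ n : ℕ, 1 ≤ n → (n:ℝ)*L - 1 ≤ (n:ℝ)*l + 1 := by
    intro n hn
    have hnposR : (0:ℝ) < n := by exact_mod_cast hn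
    set U : Ultrafilter ℕ := Ultrafilter.of atTop with hU
    have hUle : (U : Filter ℕ) ≤ atTop := Ultrafilter.of_le _
    set D : ℝ := (n:ℝ)*((n:ℝ)*B+1) + (n:ℝ)*((n:ℝ)*B) with hD
    have hD0 : 0 ≤ D := by positivity
    -- lower estimate for the empirical average at the maximizing points
    have hemp_ge : ∀ N : ℕ, 1 ≤ N →
        (n:ℝ)*L - ((n:ℝ) + D)/N - 1 ≤ emp r smax N (u n) := by
      intro N hN
      have hNpos : (0:ℝ) < N := by exact_mod_cast hN
      set θ := smax N with hθ
      have hstepa : ∀ j : ℕ, u (j+n) θ - u j θ - 1 ≤ u n (r^[j] θ) := by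
        intro j
        have := (abs_le.mp (hcoc j n θ)).2
        linarith
      have hstepb : ∀ j : ℕ, j < n → u N θ - (n:ℝ)*B - 1 ≤ u (N+j) θ := by
        intro j hj
        have h1 := (abs_le.mp (hcoc N j θ)).1
        have h2 := (abs_le.mp (hubound j (r^[N] θ))).1
        have h3 : (j:ℝ)*B ≤ (n:ℝ)*B := by
          have : (j:ℝ) ≤ n := by exact_mod_cast hj.le
          nlinarith
        linarith
      have hsum1 : ∑ j ∈ Finset.range N, (u (j+n) θ - u j θ) - N
          ≤ ∑ j ∈ Finset.range N, u n (r^[j] θ) := by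
        have := Finset.sum_le_sum (fun j (_ : j ∈ Finset.range N) => hstepa j)
        rw [Finset.sum_sub_distrib, Finset.sum_const, Finset.card_range] at this
        simpa using this
      have htele : ∑ j ∈ Finset.range N, (u (j+n) θ - u j θ)
          = ∑ j ∈ Finset.range n, u (N+j) θ - ∑ j ∈ Finset.range n, u j θ := by
        rw [Finset.sum_sub_distrib]
        have e1 : ∑ j ∈ Finset.range N, u (j+n) θ
            = ∑ j ∈ Finset.range (n+N), u j θ - ∑ j ∈ Finset.range n, u j θ := by
          rw [Finset.sum_range_add (fun j => u j θ) n N]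
          have : ∀ j, u (n+j) θ = u (j+n) θ := fun j => by rw [Nat.add_comm]
          rw [Finset.sum_congr rfl fun j _ => this j]
          ring
        have e2 : ∑ j ∈ Finset.range (N+n), u j θ
            = ∑ j ∈ Finset.range N, u j θ + ∑ j ∈ Finset.range n, u (N+j) θ :=
          Finset.sum_range_add (fun j => u j θ) N n
        have e3 : (n+N) = (N+n) := by omega
        rw [e1, e3, e2]
        ring
      have hsum2 : (N:ℝ)*((n:ℝ)*L) - (n:ℝ) - (n:ℝ)*((n:ℝ)*B+1)
          ≤ ∑ j ∈ Finset.range n, u (N+j) θ := by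
        have h1 : ∑ j ∈ Finset.range n, (u N θ - (n:ℝ)*B - 1) ≤ ∑ j ∈ Finset.range n, u (N+j) θ :=
          Finset.sum_le_sum fun j hj => hstepb j (Finset.mem_range.mp hj)
        rw [Finset.sum_const, Finset.card_range, nsmul_eq_mul] at h1
        have h2 : (N:ℝ)*L - 1 ≤ u N θ := hSge N hN
        nlinarith
      have hsum3 : ∑ j ∈ Finset.range n, u j θ ≤ (n:ℝ)*((n:ℝ)*B) := by
        have h1 : ∀ j ∈ Finset.range n, u j θ ≤ (n:ℝ)*B := by
          intro j hj
          have h2 := (abs_le.mp (hubound j θ)).2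
          have : (j:ℝ)*B ≤ (n:ℝ)*B := by
            have : (j:ℝ) ≤ n := by exact_mod_cast (Finset.mem_range.mp hj).le
            nlinarith
          linarith
        have := Finset.sum_le_sum h1
        rw [Finset.sum_const, Finset.card_range, nsmul_eq_mul] at this
        linarith
      have hA : (N:ℝ)*((n:ℝ)*L) - (n:ℝ) - D - N ≤ ∑ j ∈ Finset.range N, u n (r^[j] θ) := by
        rw [hD]
        have := hsum1
        rw [htele] at this
        linarith
      have hempeq : emp r smax N (u n) = (∑ j ∈ Finset.range N, u n (r^[j] θ))/N := by
        rw [hθ]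
        rfl
      rw [hempeq, le_div_iff₀ hNpos]
      have hexp : ((n:ℝ)*L - ((n:ℝ) + D)/N - 1) * N = (N:ℝ)*((n:ℝ)*L) - ((n:ℝ) + D) - N := by
        field_simp
      rw [hexp]
      linarith [hA]
    -- upper estimate for the empirical average at the minimizing points
    have hemp_le : ∀ N : ℕ, 1 ≤ N →
        emp r smin N (u n) ≤ (n:ℝ)*l + ((n:ℝ) + D)/N + 1 := by
      intro N hN
      have hNpos : (0:ℝ) < N := by exact_mod_cast hN
      set θ := smin N with hθ
      have hstepa : ∀ j : ℕ, u n (r^[j] θ) ≤ u (j+n) θ - u j θ + 1 := by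
        intro j
        have := (abs_le.mp (hcoc j n θ)).1
        linarith
      have hstepb : ∀ j : ℕ, j < n → u (N+j) θ ≤ u N θ + (n:ℝ)*B + 1 := by
        intro j hj
        have h1 := (abs_le.mp (hcoc N j θ)).2
        have h2 := (abs_le.mp (hubound j (r^[N] θ))).2
        have h3 : (j:ℝ)*B ≤ (n:ℝ)*B := by
          have : (j:ℝ) ≤ n := by exact_mod_cast hj.le
          nlinarith
        linarith
      have hsum1 : ∑ j ∈ Finset.range N, u n (r^[j] θ)
          ≤ ∑ j ∈ Finset.range N, (u (j+n) θ - u j θ) + N := by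
        have := Finset.sum_le_sum (fun j (_ : j ∈ Finset.range N) => hstepa j)
        rw [Finset.sum_add_distrib, Finset.sum_const, Finset.card_range] at this
        simpa using this
      have htele : ∑ j ∈ Finset.range N, (u (j+n) θ - u j θ)
          = ∑ j ∈ Finset.range n, u (N+j) θ - ∑ j ∈ Finset.range n, u j θ := by
        rw [Finset.sum_sub_distrib]
        have e1 : ∑ j ∈ Finset.range N, u (j+n) θ
            = ∑ j ∈ Finset.range (n+N), u j θ - ∑ j ∈ Finset.range n, u j θ := by
          rw [Finset.sum_range_add (fun j => u j θ) n N]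
          have : ∀ j, u (n+j) θ = u (j+n) θ := fun j => by rw [Nat.add_comm]
          rw [Finset.sum_congr rfl fun j _ => this j]
          ring
        have e2 : ∑ j ∈ Finset.range (N+n), u j θ
            = ∑ j ∈ Finset.range N, u j θ + ∑ j ∈ Finset.range n, u (N+j) θ :=
          Finset.sum_range_add (fun j => u j θ) N n
        have e3 : (n+N) = (N+n) := by omega
        rw [e1, e3, e2]
        ring
      have hsum2 : ∑ j ∈ Finset.range n, u (N+j) θ
          ≤ (N:ℝ)*((n:ℝ)*l) + (n:ℝ) + (n:ℝ)*((n:ℝ)*B+1) := by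
        have h1 : ∑ j ∈ Finset.range n, u (N+j) θ ≤ ∑ j ∈ Finset.range n, (u N θ + (n:ℝ)*B + 1) :=
          Finset.sum_le_sum fun j hj => hstepb j (Finset.mem_range.mp hj)
        rw [Finset.sum_const, Finset.card_range, nsmul_eq_mul] at h1
        have h2 : u N θ ≤ (N:ℝ)*l + 1 := hIle N hN
        nlinarith
      have hsum3 : -((n:ℝ)*((n:ℝ)*B)) ≤ ∑ j ∈ Finset.range n, u j θ := by
        have h1 : ∀ j ∈ Finset.range n, -((n:ℝ)*B) ≤ u j θ := by
          intro j hj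
          have h2 := (abs_le.mp (hubound j θ)).1
          have : (j:ℝ)*B ≤ (n:ℝ)*B := by
            have : (j:ℝ) ≤ n := by exact_mod_cast (Finset.mem_range.mp hj).le
            nlinarith
          linarith
        have := Finset.sum_le_sum h1
        rw [Finset.sum_const, Finset.card_range, nsmul_eq_mul] at this
        linarith
      have hA : ∑ j ∈ Finset.range N, u n (r^[j] θ)
          ≤ (N:ℝ)*((n:ℝ)*l) + (n:ℝ) + D + N := by
        rw [hD]
        have := hsum1
        rw [htele] at this
        linarith
      have hempeq : emp r smin N (u n) = (∑ j ∈ Finset.range N, u n (r^[j] θ))/N := by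
        rw [hθ]
        rfl
      rw [hempeq, div_le_iff₀ hNpos]
      have hexp : ((n:ℝ)*l + ((n:ℝ) + D)/N + 1) * N = (N:ℝ)*((n:ℝ)*l) + ((n:ℝ) + D) + N := by
        field_simp
      rw [hexp]
      linarith [hA]
    -- the limiting functionals both equal integration against μ
    have hlam1 : empLam r smax U (u n) = ∫ x, u n x ∂μ :=
      lam_eq_integral (empLam_posFunctional r smax U hUle) hr
        (fun g hg => empLam_inv r smax hr U hUle hg) hμprob hμinv huniq' (u n) (hucont n)
    have hlam2 : empLam r smin U (u n) = ∫ x, u n x ∂μ :=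
      lam_eq_integral (empLam_posFunctional r smin U hUle) hr
        (fun g hg => empLam_inv r smin hr U hUle hg) hμprob hμinv huniq' (u n) (hucont n)
    have hctend : Tendsto (fun N : ℕ => (n:ℝ)*L - ((n:ℝ) + D)/N - 1) atTop
        (𝓝 ((n:ℝ)*L - 0 - 1)) :=
      (tendsto_const_nhds.sub (tendsto_const_div_atTop_nhds_zero_nat _)).sub tendsto_const_nhds
    have hctend' : Tendsto (fun N : ℕ => (n:ℝ)*l + ((n:ℝ) + D)/N + 1) atTop
        (𝓝 ((n:ℝ)*l + 0 + 1)) :=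
      (tendsto_const_nhds.add (tendsto_const_div_atTop_nhds_zero_nat _)).add tendsto_const_nhds
    have h1 : (n:ℝ)*L - 0 - 1 ≤ empLam r smax U (u n) := by
      refine le_of_tendsto_of_tendsto (hctend.mono_left hUle)
        (empLam_spec r smax U (hucont n)) ?_
      apply hUle
      filter_upwards [eventually_ge_atTop 1] with N hN
      exact hemp_ge N hN
    have h2 : empLam r smin U (u n) ≤ (n:ℝ)*l + 0 + 1 := by
      refine le_of_tendsto_of_tendsto (empLam_spec r smin U (hucont n))
        (hctend'.mono_left hUle) ?_
      apply hUle
      filter_upwards [eventually_ge_atTop 1] with N hN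
      exact hemp_le N hN
    rw [hlam1] at h1
    rw [hlam2] at h2
    linarith
  -- L = l
  have hLl' : L ≤ l := by
    have h2n : ∀ n : ℕ, 1 ≤ n → L - l ≤ 2/(n:ℝ) := by
      intro n hn
      have hnpos : (0:ℝ) < n := by exact_mod_cast hn
      rw [le_div_iff₀ hnpos]
      have := hkey n hn
      nlinarith
    have h0 : Tendsto (fun n : ℕ => 2/(n:ℝ)) atTop (𝓝 0) :=
      tendsto_const_div_atTop_nhds_zero_nat 2
    have := le_of_tendsto_of_tendsto tendsto_const_nhds h0
      (by filter_upwards [eventually_ge_atTop 1] with n hn; exact h2n n hn)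
    linarith
  have hLeq : l = L := le_antisymm hlL hLl'
  refine ⟨L, fun ε hε => ?_⟩
  have e1 : ∀ᶠ n : ℕ in atTop, (S n + 1)/n < L + ε :=
    hLtend.eventually_lt_const (by linarith)
  have e2 : ∀ᶠ n : ℕ in atTop, L - ε < (I n - 1)/n := by
    have := hItend
    rw [hLeq] at this
    exact this.eventually_const_lt (by linarith)
  filter_upwards [e1, e2, eventually_ge_atTop 1] with n hn1 hn2 hn3
  intro θ x
  have hnpos : (0:ℝ) < n := by exact_mod_cast hn3
  have hdev := fibIter_dev (r := r) hFper hFmono n θ x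
  have hd1 := (abs_le.mp hdev).1
  have hd2 := (abs_le.mp hdev).2
  have hu1 : u n θ ≤ S n := hsmax n θ
  have hu2 : I n ≤ u n θ := hsmin n θ
  have hueq : fibIter r F n θ 0 = u n θ := rfl
  rw [hueq] at hd1 hd2
  rw [div_lt_iff₀ hnpos] at hn1
  rw [lt_div_iff₀ hnpos] at hn2
  rw [abs_lt]
  constructor
  · have hlow : (L - ε) * n < fibIter r F n θ x - x := by nlinarith
    have h5 : L - ε < (fibIter r F n θ x - x)/n := by
      rw [lt_div_iff₀ hnpos]
      exact hlow
    linarith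
  · have hhigh : fibIter r F n θ x - x < (L + ε) * n := by nlinarith
    have h5 : (fibIter r F n θ x - x)/n < L + ε := by
      rw [div_lt_iff₀ hnpos]
      exact hhigh
    linarith

end Core
section Approx

variable {Θ : Type*} [MetricSpace Θ] [CompactSpace Θ] {F : Θ → ℝ → ℝ}

lemma uc_lemma (hFc : Continuous fun p : Θ × ℝ => F p.1 p.2)
    (hFper : ∀ θ (x : ℝ) (k : ℤ), F θ (x + k) = F θ x + k) :
    ∀ η : ℝ, 0 < η → ∃ δ : ℝ, 0 < δ ∧ ∀ θ (x y : ℝ), |x - y| ≤ δ → |F θ x - F θ y| ≤ η := by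
  intro η hη
  set Φ : Θ × ℝ → ℝ := fun p => F p.1 p.2 with hΦ
  set K : Set (Θ × ℝ) := Set.univ ×ˢ Set.Icc (-1 : ℝ) 2 with hK
  have hKc : IsCompact K := isCompact_univ.prod isCompact_Icc
  have hUC : UniformContinuousOn Φ K :=
    hKc.uniformContinuousOn_of_continuous hFc.continuousOn
  rw [Metric.uniformContinuousOn_iff] at hUC
  obtain ⟨δ0, hδ0, hUC⟩ := hUC η hη
  refine ⟨min (δ0/2) 1, by positivity, fun θ x y hxy => ?_⟩
  set k : ℤ := ⌊x⌋ with hkd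
  set x0 : ℝ := x - k with hx0
  set y0 : ℝ := y - k with hy0
  have hx0a : 0 ≤ x0 := by
    have h := Int.floor_le x
    rw [hx0, hkd]
    linarith
  have hx0b : x0 < 1 := by
    have h := Int.lt_floor_add_one x
    rw [hx0, hkd]
    linarith
  have hx0mem : x0 ∈ Set.Icc (-1 : ℝ) 2 := ⟨by linarith, by linarith⟩
  have hxy0 : |x0 - y0| ≤ min (δ0/2) 1 := by
    have : x0 - y0 = x - y := by rw [hx0, hy0]; ring
    rw [this]
    exact hxy
  have hy0mem : y0 ∈ Set.Icc (-1 : ℝ) 2 := by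
    have h1 := abs_le.mp hxy0
    have h2 : min (δ0/2) 1 ≤ 1 := min_le_right _ _
    constructor
    · linarith [h1.2]
    · linarith [h1.1]
  have hfx : F θ x = F θ x0 + k := by
    have := hFper θ x0 k
    rw [hx0] at this ⊢
    have hxe : x - (k:ℝ) + (k:ℝ) = x := by ring
    rw [hxe] at this
    exact this
  have hfy : F θ y = F θ y0 + k := by
    have := hFper θ y0 k
    rw [hy0] at this ⊢
    have hye : y - (k:ℝ) + (k:ℝ) = y := by ring
    rw [hye] at this
    exact this
  have hmem1 : (θ, x0) ∈ K := ⟨Set.mem_univ _, hx0mem⟩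
  have hmem2 : (θ, y0) ∈ K := ⟨Set.mem_univ _, hy0mem⟩
  have hdist : dist (θ, x0) (θ, y0) < δ0 := by
    rw [Prod.dist_eq]
    simp only [dist_self]
    have : dist x0 y0 ≤ min (δ0/2) 1 := by
      rw [Real.dist_eq]
      exact hxy0
    have h2 : min (δ0/2) 1 ≤ δ0/2 := min_le_left _ _
    have : dist x0 y0 < δ0 := by linarith
    simp [this, hδ0]
  have := hUC (θ, x0) hmem1 (θ, y0) hmem2 hdist
  rw [hΦ] at this
  simp only [Real.dist_eq] at this
  rw [hfx, hfy]
  have heq : F θ x0 + k - (F θ y0 + k) = F θ x0 - F θ y0 := by ring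
  rw [heq]
  exact this.le

variable {r : Θ → Θ}

lemma approx_lemma (hFc : Continuous fun p : Θ × ℝ => F p.1 p.2)
    (hFper : ∀ θ (x : ℝ) (k : ℤ), F θ (x + k) = F θ x + k) :
    ∀ (k : ℕ) (η : ℝ), 0 < η → ∃ δ : ℝ, 0 < δ ∧ ∀ F' : Θ → ℝ → ℝ,
      (∀ θ x, |F' θ x - F θ x| ≤ δ) →
      ∀ θ (x : ℝ), |fibIter r F' k θ x - fibIter r F k θ x| ≤ η := by
  intro k
  induction k with
  | zero =>
      intro η hη
      exact ⟨1, one_pos, fun F' _ θ x => by simp [fibIter_zero, hη.le]⟩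
  | succ k ih =>
      intro η hη
      obtain ⟨δ1, hδ1, huc⟩ := uc_lemma hFc hFper (η/2) (by linarith)
      obtain ⟨δ2, hδ2, hih⟩ := ih δ1 hδ1
      refine ⟨min δ2 (η/2), by positivity, fun F' hdiff θ x => ?_⟩
      have hdiff2 : ∀ θ x, |F' θ x - F θ x| ≤ δ2 :=
        fun θ x => le_trans (hdiff θ x) (min_le_left _ _)
      have hk := hih F' hdiff2 θ x
      rw [fibIter_succ, fibIter_succ]
      set a := r^[k] θ
      set p := fibIter r F' k θ x
      set q := fibIter r F k θ x
      have h1 : |F' a p - F a p| ≤ η/2 :=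
        le_trans (hdiff a p) (min_le_right _ _)
      have h2 : |F a p - F a q| ≤ η/2 := huc a p q hk
      calc |F' a p - F a q| = |(F' a p - F a p) + (F a p - F a q)| := by ring_nf
        _ ≤ |F' a p - F a p| + |F a p - F a q| := abs_add_le _ _
        _ ≤ η := by linarith

end Approx

theorem stmt7 {Θ : Type*} [MetricSpace Θ] [CompactSpace Θ] [Nonempty Θ]
    [MeasurableSpace Θ] [BorelSpace Θ]
    (r : Θ → Θ) (hr : Continuous r)
    (hUE : ∃! μ : Measure Θ, IsProbabilityMeasure μ ∧ μ.map r = μ)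
    (f : Θ × AddCircle (1 : ℝ) → Θ × AddCircle (1 : ℝ)) (hf : Continuous f)
    (F : Θ → ℝ → ℝ) (hFc : Continuous fun p : Θ × ℝ => F p.1 p.2)
    (hFper : ∀ θ (x : ℝ) (k : ℤ), F θ (x + k) = F θ x + k)
    (hFmono : ∀ θ, Monotone (F θ))
    (hlift : ∀ θ (x : ℝ), f (θ, (x : AddCircle (1 : ℝ))) = (r θ, ((F θ x : ℝ) : AddCircle (1 : ℝ))))
    (hhom : (⟨f, hf⟩ : C(Θ × AddCircle (1 : ℝ), Θ × AddCircle (1 : ℝ))).Homotopic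
      ⟨fun p => (r p.1, p.2), (hr.comp continuous_fst).prodMk continuous_snd⟩) :
    ∃ ρ : ℝ,
      -- the limit `ρ(F) = lim (F^n_θ(x) − x)/n` exists, is independent of `(θ,x)`,
      -- and the convergence is uniform on `Θ × ℝ`
      TendstoUniformly (fun (n : ℕ) (p : Θ × ℝ) => (fibIter r F n p.1 p.2 - p.2) / n)
        (fun _ => ρ) atTop ∧
      -- `ρ(F)` depends continuously on `F` (w.r.t. uniform convergence of lifts)
      ∀ ε > 0, ∃ δ > 0, ∀ F' : Θ → ℝ → ℝ,
        Continuous (fun p : Θ × ℝ => F' p.1 p.2) →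
        (∀ θ (x : ℝ) (k : ℤ), F' θ (x + k) = F' θ x + k) →
        (∀ θ, Monotone (F' θ)) →
        (∀ θ x, |F' θ x - F θ x| ≤ δ) →
        ∀ ρ' : ℝ,
          (∀ θ x, Tendsto (fun n : ℕ => (fibIter r F' n θ x - x) / n) atTop (𝓝 ρ')) →
          |ρ' - ρ| ≤ ε := by
  obtain ⟨ρ, hρ⟩ := exists_rho r hr hUE F hFc hFper hFmono
  refine ⟨ρ, ?_, ?_⟩
  · rw [Metric.tendstoUniformly_iff]
    intro ε hε
    filter_upwards [hρ ε hε] with n hn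
    intro p
    rw [Real.dist_eq, abs_sub_comm]
    exact hn p.1 p.2
  · intro ε hε
    have h4pos : (0:ℝ) < ε/4 := by linarith
    obtain ⟨n, hgood, hnbig⟩ :=
      ((hρ (ε/4) h4pos).and (eventually_ge_atTop (max 1 ⌈(4:ℝ)/ε⌉₊))).exists
    have hn1 : 1 ≤ n := le_trans (le_max_left _ _) hnbig
    have hnpos : (0:ℝ) < n := by exact_mod_cast hn1
    have hn4 : 4/ε ≤ (n:ℝ) := by
      have h1 : 4/ε ≤ (⌈(4:ℝ)/ε⌉₊ : ℝ) := Nat.le_ceil _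
      have h2 : (⌈(4:ℝ)/ε⌉₊ : ℕ) ≤ n := le_trans (le_max_right _ _) hnbig
      have h3 : ((⌈(4:ℝ)/ε⌉₊ : ℕ) : ℝ) ≤ n := by exact_mod_cast h2
      linarith
    have hinv_n : 1/(n:ℝ) ≤ ε/4 := by
      rw [div_le_div_iff₀ hnpos (by norm_num : (0:ℝ) < 4)]
      have := (div_le_iff₀ hε).mp hn4
      linarith
    obtain ⟨δ, hδpos, happrox⟩ :=
      approx_lemma (r := r) hFc hFper n ((n:ℝ)*ε/4) (by positivity)
    refine ⟨δ, hδpos, ?_⟩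
    intro F' hF'c hF'per hF'mono hdiff ρ' hρ'
    have hubd : ∀ ψ : Θ, fibIter r F' n ψ 0 ≤ (n:ℝ)*(ρ + ε/2)
        ∧ (n:ℝ)*(ρ - ε/2) ≤ fibIter r F' n ψ 0 := by
      intro ψ
      have h1 := hgood ψ 0
      rw [sub_zero] at h1
      obtain ⟨h2a, h2b⟩ := abs_lt.mp h1
      have h3 : fibIter r F n ψ 0 < (n:ℝ)*(ρ + ε/4) := by
        have h4 : (fibIter r F n ψ 0)/n < ρ + ε/4 := by linarith
        rw [div_lt_iff₀ hnpos] at h4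
        nlinarith
      have h3' : (n:ℝ)*(ρ - ε/4) < fibIter r F n ψ 0 := by
        have h4 : ρ - ε/4 < (fibIter r F n ψ 0)/n := by linarith
        rw [lt_div_iff₀ hnpos] at h4
        nlinarith
      have h5 := abs_le.mp (happrox F' hdiff ψ 0)
      constructor
      · nlinarith [h5.2]
      · nlinarith [h5.1]
    set θ0 : Θ := Classical.arbitrary Θ with hθ0
    have hcoc' : ∀ a b : ℕ,
        |fibIter r F' (a+b) θ0 0 - fibIter r F' a θ0 0 - fibIter r F' b (r^[a] θ0) 0| ≤ 1 :=
      fun a b => fibIter_cocycle hF'per hF'mono a b θ0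
    have hblock : ∀ k : ℕ, fibIter r F' (k*n) θ0 0 ≤ (k:ℝ)*((n:ℝ)*(ρ+ε/2)+1) := by
      intro k
      induction k with
      | zero => simp [fibIter_zero]
      | succ k ih =>
          have h2 := (abs_le.mp (hcoc' (k*n) n)).2
          have h3 := (hubd (r^[k*n] θ0)).1
          have hkn : (k+1)*n = k*n + n := by ring
          rw [hkn]
          push_cast
          nlinarith
    have hblock' : ∀ k : ℕ, (k:ℝ)*((n:ℝ)*(ρ-ε/2)-1) ≤ fibIter r F' (k*n) θ0 0 := by
      intro k
      induction k with
      | zero => simp [fibIter_zero]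
      | succ k ih =>
          have h2 := (abs_le.mp (hcoc' (k*n) n)).1
          have h3 := (hubd (r^[k*n] θ0)).2
          have hkn : (k+1)*n = k*n + n := by ring
          rw [hkn]
          push_cast
          nlinarith
    have hmul : Tendsto (fun k : ℕ => k*n) atTop atTop := by
      apply tendsto_atTop_mono (fun k => Nat.le_mul_of_pos_right k (by omega : 0 < n))
      exact tendsto_id
    have hsub : Tendsto (fun k : ℕ => (fibIter r F' (k*n) θ0 0 - 0)/((k*n : ℕ):ℝ))
        atTop (𝓝 ρ') := (hρ' θ0 0).comp hmul
    have hup : ρ' ≤ ρ + ε/2 + 1/n := by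
      apply le_of_tendsto hsub
      filter_upwards [eventually_ge_atTop 1] with k hk
      have hknpos : (0:ℝ) < ((k*n : ℕ):ℝ) := by
        have : 0 < k*n := Nat.mul_pos (by omega) (by omega)
        exact_mod_cast this
      rw [sub_zero, div_le_iff₀ hknpos]
      have hcast : ((k*n : ℕ):ℝ) = (k:ℝ)*(n:ℝ) := by push_cast; ring
      rw [hcast]
      have heq : (ρ + ε/2 + 1/(n:ℝ)) * ((k:ℝ)*(n:ℝ)) = (k:ℝ)*((n:ℝ)*(ρ+ε/2)+1) := by
        field_simp
      rw [heq]
      exact hblock k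
    have hlow : ρ - ε/2 - 1/n ≤ ρ' := by
      apply ge_of_tendsto hsub
      filter_upwards [eventually_ge_atTop 1] with k hk
      have hknpos : (0:ℝ) < ((k*n : ℕ):ℝ) := by
        have : 0 < k*n := Nat.mul_pos (by omega) (by omega)
        exact_mod_cast this
      rw [sub_zero, le_div_iff₀ hknpos]
      have hcast : ((k*n : ℕ):ℝ) = (k:ℝ)*(n:ℝ) := by push_cast; ring
      rw [hcast]
      have heq : (ρ - ε/2 - 1/(n:ℝ)) * ((k:ℝ)*(n:ℝ)) = (k:ℝ)*((n:ℝ)*(ρ-ε/2)-1) := by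
        field_simp
      rw [heq]
      exact hblock' k
    rw [abs_le]
    constructor
    · linarith
    · linarith
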